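/- Let n ∈ ℕ and let a, b : Fin n → Fin n → ℝ be skew-symmetric in their two indices (a i j = -a j i and b i j = -b j i for all i, j). In Cl_n set A = ∑_{i<j} (a i j) • (eᵢ * eⱼ), B = ∑_{i<j} (b i j) • (eᵢ * eⱼ), and for each k ∈ Fin n set α_k = ∑_q (a k q) • e_q and β_k = ∑_q (b k q) • e_q. Then A * B - B * A = ∑_k (α_k * β_k - β_k * α_k). (This is the coordinate form of the identity deⁱ·β - β·deⁱ = 2 ∑_k ι(e_k)deⁱ ∧ ι(e_k)β for 2-forms acting by Clifford multiplication, proved inside Lemma 'dxidxj' of the paper.) -/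

import Mathlib

open scoped BigOperators

section Helpers

variable {M : Type*} [AddCommMonoid M] {n : ℕ}

lemma sum2_congr (f g : Fin n → Fin n → M) (h : ∀ i j, f i j = g i j) :
    (∑ i, ∑ j, f i j) = ∑ i, ∑ j, g i j :=
  Finset.sum_congr rfl fun i _ => Finset.sum_congr rfl fun j _ => h i j

lemma sum3_congr (f g : Fin n → Fin n → Fin n → M) (h : ∀ i j k, f i j k = g i j k) :
    (∑ i, ∑ j, ∑ k, f i j k) = ∑ i, ∑ j, ∑ k, g i j k :=
  Finset.sum_congr rfl fun i _ => Finset.sum_congr rfl fun j _ =>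
    Finset.sum_congr rfl fun k _ => h i j k

lemma sum4_congr (f g : Fin n → Fin n → Fin n → Fin n → M)
    (h : ∀ i j k l, f i j k l = g i j k l) :
    (∑ i, ∑ j, ∑ k, ∑ l, f i j k l) = ∑ i, ∑ j, ∑ k, ∑ l, g i j k l :=
  Finset.sum_congr rfl fun i _ => Finset.sum_congr rfl fun j _ =>
    Finset.sum_congr rfl fun k _ => Finset.sum_congr rfl fun l _ => h i j k l

lemma sum3_swap12 (f : Fin n → Fin n → Fin n → M) :
    (∑ i, ∑ j, ∑ k, f i j k) = ∑ j, ∑ i, ∑ k, f i j k :=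
  Finset.sum_comm

lemma sum3_swap23 (f : Fin n → Fin n → Fin n → M) :
    (∑ i, ∑ j, ∑ k, f i j k) = ∑ i, ∑ k, ∑ j, f i j k :=
  Finset.sum_congr rfl fun _ _ => Finset.sum_comm

lemma sum4_swap34 (f : Fin n → Fin n → Fin n → Fin n → M) :
    (∑ i, ∑ j, ∑ k, ∑ l, f i j k l) = ∑ i, ∑ j, ∑ l, ∑ k, f i j k l :=
  Finset.sum_congr rfl fun _ _ => Finset.sum_congr rfl fun _ _ => Finset.sum_comm

lemma sum4_reorder (f : Fin n → Fin n → Fin n → Fin n → M) :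
    (∑ i, ∑ j, ∑ k, ∑ l, f i j k l) = ∑ k, ∑ l, ∑ i, ∑ j, f i j k l := by
  calc (∑ i, ∑ j, ∑ k, ∑ l, f i j k l)
      = ∑ p : Fin n × Fin n, ∑ k, ∑ l, f p.1 p.2 k l := by
        rw [Fintype.sum_prod_type]
    _ = ∑ p : Fin n × Fin n, ∑ q : Fin n × Fin n, f p.1 p.2 q.1 q.2 := by
        refine Finset.sum_congr rfl fun p _ => ?_
        rw [Fintype.sum_prod_type]
    _ = ∑ q : Fin n × Fin n, ∑ p : Fin n × Fin n, f p.1 p.2 q.1 q.2 := Finset.sum_comm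
    _ = ∑ k, ∑ l, ∑ i, ∑ j, f i j k l := by
        rw [Fintype.sum_prod_type]
        refine Finset.sum_congr rfl fun k _ => Finset.sum_congr rfl fun l _ => ?_
        rw [Fintype.sum_prod_type]

lemma sum_sym (f : Fin n → Fin n → M)
    (hsymm : ∀ i j, f i j = f j i) (hdiag : ∀ i, f i i = 0) :
    (∑ i, ∑ j, f i j)
      = (∑ i, ∑ j ∈ Finset.Ioi i, f i j) + ∑ i, ∑ j ∈ Finset.Ioi i, f i j := by
  have conv : ∀ (g : Fin n → Fin n → M),
      (∑ i, ∑ j, if i < j then g i j else 0) = ∑ i, ∑ j ∈ Finset.Ioi i, g i j := by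
    intro g
    refine Finset.sum_congr rfl fun i _ => ?_
    rw [← Finset.sum_filter]
    exact Finset.sum_congr (by ext x; simp) fun _ _ => rfl
  calc (∑ i, ∑ j, f i j)
      = ∑ i, ∑ j, ((if i < j then f i j else 0) + (if j < i then f i j else 0)) := by
        refine sum2_congr _ _ fun i j => ?_
        rcases lt_trichotomy i j with h | h | h
        · rw [if_pos h, if_neg (lt_asymm h), add_zero]
        · subst h; simp [hdiag]
        · rw [if_neg (lt_asymm h), if_pos h, zero_add]
    _ = (∑ i, ∑ j, if i < j then f i j else 0)
          + ∑ i, ∑ j, if j < i then f i j else 0 := by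
        simp only [Finset.sum_add_distrib]
    _ = (∑ i, ∑ j ∈ Finset.Ioi i, f i j) + ∑ i, ∑ j ∈ Finset.Ioi i, f i j := by
        rw [conv]
        congr 1
        rw [Finset.sum_comm]
        rw [show (∑ j : Fin n, ∑ i : Fin n, if j < i then f i j else 0)
            = ∑ j : Fin n, ∑ i : Fin n, if j < i then f j i else 0 from
          sum2_congr _ _ fun j i => by by_cases h : j < i <;> simp [h, hsymm i j]]
        exact conv (fun j i => f j i)

variable [Module ℝ M]

lemma col (i : Fin n) (f : Fin n → ℝ) (X : Fin n → M) :
    (∑ l, (f l * (if i = l then (2:ℝ) else 0)) • X l) = (f i * 2) • X i := by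
  rw [Finset.sum_eq_single i]
  · rw [if_pos rfl]
  · intro l _ hl
    rw [if_neg (fun h => hl h.symm), mul_zero, zero_smul]
  · intro h; exact absurd (Finset.mem_univ i) h

lemma col' (i : Fin n) (f : Fin n → ℝ) (X : Fin n → M) :
    (∑ l, (f l * (if l = i then (2:ℝ) else 0)) • X l) = (f i * 2) • X i := by
  rw [Finset.sum_eq_single i]
  · rw [if_pos rfl]
  · intro l _ hl
    rw [if_neg hl, mul_zero, zero_smul]
  · intro h; exact absurd (Finset.mem_univ i) h

end Helpers

lemma comm4 {A' : Type*} [Ring A'] [Algebra ℝ A'] (u v w x : A') (p q r s : ℝ)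
    (hvw : v*w = -(w*v) - p • (1:A')) (huw : u*w = -(w*u) - q • (1:A'))
    (hvx : v*x = -(x*v) - r • (1:A')) (hux : u*x = -(x*u) - s • (1:A')) :
    u*v*(w*x) - w*x*(u*v)
      = s•(w*v) - r•(w*u) - q•(x*v) - p•(u*x) - (q*r)•(1:A') := by
  have e1 : u*v*(w*x) = u*(v*w)*x := by noncomm_ring
  rw [e1, hvw]
  simp only [mul_sub, sub_mul, mul_neg, neg_mul, mul_smul_comm, smul_mul_assoc, mul_one, one_mul,
    mul_assoc, neg_neg, smul_smul, smul_sub, smul_neg]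
  rw [← mul_assoc u w, huw]
  simp only [mul_sub, sub_mul, mul_neg, neg_mul, mul_smul_comm, smul_mul_assoc, mul_one, one_mul,
    mul_assoc, neg_neg, smul_smul, smul_sub, smul_neg]
  simp only [hvx]
  simp only [mul_sub, sub_mul, mul_neg, neg_mul, mul_smul_comm, smul_mul_assoc, mul_one, one_mul,
    mul_assoc, neg_neg, smul_smul, smul_sub, smul_neg]
  rw [show u*(x*v) = (u*x)*v from (mul_assoc u x v).symm, hux]
  simp only [mul_sub, sub_mul, mul_neg, neg_mul, mul_smul_comm, smul_mul_assoc, mul_one, one_mul,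
    mul_assoc, neg_neg, smul_smul, smul_sub, smul_neg]
  module
noncomputable def Q (n : ℕ) : QuadraticForm ℝ (EuclideanSpace ℝ (Fin n)) :=
  QuadraticMap.ofPolar (fun v => -∑ i, v i ^ 2)
    (fun a v => by
      simp only [PiLp.smul_apply, smul_eq_mul, mul_pow]
      rw [← Finset.mul_sum]
      ring)
    (fun x x' y => by
      have h : ∀ (u w : EuclideanSpace ℝ (Fin n)),
          QuadraticMap.polar (fun v : EuclideanSpace ℝ (Fin n) => -∑ i, v i ^ 2) u w
            = -(2 * ∑ i, u i * w i) := by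
        intro u w
        have hsq : ∀ i, (u i + w i) ^ 2 = u i ^ 2 + w i ^ 2 + 2 * (u i * w i) := fun i => by ring
        simp_rw [QuadraticMap.polar, PiLp.add_apply, hsq, Finset.sum_add_distrib,
          ← Finset.mul_sum]
        ring
      simp_rw [h, PiLp.add_apply, add_mul, Finset.sum_add_distrib]
      ring)
    (fun a x y => by
      have h : ∀ (u w : EuclideanSpace ℝ (Fin n)),
          QuadraticMap.polar (fun v : EuclideanSpace ℝ (Fin n) => -∑ i, v i ^ 2) u w
            = -(2 * ∑ i, u i * w i) := by
        intro u w
        have hsq : ∀ i, (u i + w i) ^ 2 = u i ^ 2 + w i ^ 2 + 2 * (u i * w i) := fun i => by ring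
        simp_rw [QuadraticMap.polar, PiLp.add_apply, hsq, Finset.sum_add_distrib,
          ← Finset.mul_sum]
        ring
      simp_rw [h, PiLp.smul_apply, smul_eq_mul, mul_assoc, ← Finset.mul_sum]
      ring)

/-- The image in the Clifford algebra `Cl_n` of the `i`-th standard basis vector. -/
noncomputable def e {n : ℕ} (i : Fin n) : CliffordAlgebra (Q n) :=
  CliffordAlgebra.ι (Q n) (EuclideanSpace.single i 1)

lemma Q_single {n : ℕ} (i : Fin n) : Q n (EuclideanSpace.single i 1) = -1 := by
  show -∑ x : Fin n, (EuclideanSpace.single i 1 : EuclideanSpace ℝ (Fin n)) x ^ 2 = -1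
  simp [EuclideanSpace.single_apply]

lemma e_swap {n : ℕ} (i j : Fin n) :
    e i * e j = -(e j * e i) - algebraMap ℝ _ (if i = j then (2:ℝ) else 0) := by
  have h := CliffordAlgebra.ι_mul_ι_add_swap (Q := Q n)
    (EuclideanSpace.single i 1) (EuclideanSpace.single j 1)
  have hpolar : QuadraticMap.polar (Q n) (EuclideanSpace.single i 1)
      (EuclideanSpace.single j 1) = -(if i = j then (2:ℝ) else 0) := by
    have hQv : ∀ v : EuclideanSpace ℝ (Fin n), Q n v = -∑ x, v x ^ 2 := fun v => rfl
    simp only [QuadraticMap.polar, hQv, PiLp.add_apply, EuclideanSpace.single_apply]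
    by_cases hij : i = j
    · subst hij
      have : ∀ x : Fin n, ((if x = i then (1:ℝ) else 0) + if x = i then 1 else 0) ^ 2
          = if x = i then 4 else 0 := by intro x; split <;> norm_num
      have hsq : ∀ x : Fin n, ((if x = i then (1:ℝ) else 0)) ^ 2 = if x = i then 1 else 0 := by
        intro x; split <;> norm_num
      simp_rw [this, hsq, Finset.sum_ite_eq', Finset.mem_univ, if_true]
      ring
    · have : ∀ x : Fin n, ((if x = i then (1:ℝ) else 0) + if x = j then 1 else 0) ^ 2
          = (if x = i then 1 else 0) + (if x = j then 1 else 0) := by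
        intro x
        rcases eq_or_ne x i with h1 | h1 <;> rcases eq_or_ne x j with h2 | h2 <;>
          first
          | (exact absurd (h1.symm.trans h2) hij)
          | simp [h1, h2, hij, Ne.symm hij]
      have hsq : ∀ x : Fin n, ((if x = i then (1:ℝ) else 0)) ^ 2 = if x = i then 1 else 0 := by
        intro x; split <;> norm_num
      have hsqj : ∀ x : Fin n, ((if x = j then (1:ℝ) else 0)) ^ 2 = if x = j then 1 else 0 := by
        intro x; split <;> norm_num
      simp_rw [this, hsq, hsqj, Finset.sum_add_distrib, Finset.sum_ite_eq',
        Finset.mem_univ, if_true, if_neg hij]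
      ring
  rw [hpolar, map_neg] at h
  have h' : e i * e j + e j * e i
      = -(algebraMap ℝ (CliffordAlgebra (Q n)) (if i = j then (2:ℝ) else 0)) := h
  rw [eq_sub_of_add_eq h']
  abel

set_option maxHeartbeats 1000000 in
theorem clifford_two_form_commutator (n : ℕ) (a b : Fin n → Fin n → ℝ)
    (ha : ∀ i j : Fin n, a i j = -a j i) (hb : ∀ i j : Fin n, b i j = -b j i)
    (A B : CliffordAlgebra (Q n)) (α β : Fin n → CliffordAlgebra (Q n))
    (hA : A = ∑ i : Fin n, ∑ j ∈ Finset.Ioi i, a i j • (e i * e j))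
    (hB : B = ∑ i : Fin n, ∑ j ∈ Finset.Ioi i, b i j • (e i * e j))
    (hα : ∀ k : Fin n, α k = ∑ q : Fin n, a k q • e q)
    (hβ : ∀ k : Fin n, β k = ∑ q : Fin n, b k q • e q) :
    A * B - B * A = ∑ k : Fin n, (α k * β k - β k * α k) := by
  classical
  have hsw : ∀ i j : Fin n, e i * e j
      = -(e j * e i) - (if i = j then (2:ℝ) else 0) • (1 : CliffordAlgebra (Q n)) := by
    intro i j
    rw [e_swap i j, Algebra.algebraMap_eq_smul_one]
  have haz : ∀ i, a i i = 0 := fun i => by have := ha i i; linarith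
  have hbz : ∀ i, b i i = 0 := fun i => by have := hb i i; linarith
  have hsymm : ∀ (c : Fin n → Fin n → ℝ), (∀ i j, c i j = -c j i) →
      ∀ i j : Fin n, c i j • (e i * e j) = c j i • (e j * e i) := by
    intro c hc i j
    by_cases h : i = j
    · subst h; rfl
    · rw [hsw i j, if_neg h, zero_smul, sub_zero, hc j i]
      rw [smul_neg, neg_smul]
  have hSa : (∑ i, ∑ j, a i j • (e i * e j)) = A + A := by
    rw [sum_sym _ (hsymm a ha) (fun i => by rw [haz i, zero_smul]), ← hA]
  have hSb : (∑ i, ∑ j, b i j • (e i * e j)) = B + B := by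
    rw [sum_sym _ (hsymm b hb) (fun i => by rw [hbz i, zero_smul]), ← hB]
  have hP : (A+A)*(B+B) = ∑ i, ∑ j, ∑ k, ∑ l,
      (a i j * b k l) • ((e i * e j) * (e k * e l)) := by
    rw [← hSa, ← hSb]
    simp only [Finset.sum_mul, Finset.mul_sum, smul_mul_smul_comm]
    exact (sum4_reorder (fun i j k l => (a i j * b k l) • ((e i * e j) * (e k * e l)))).symm
  have hQm : (B+B)*(A+A) = ∑ i, ∑ j, ∑ k, ∑ l,
      (a i j * b k l) • ((e k * e l) * (e i * e j)) := by
    rw [← hSa, ← hSb]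
    simp only [Finset.sum_mul, Finset.mul_sum, smul_mul_smul_comm]
    exact sum4_congr _ _ fun i j k l => by rw [mul_comm (b k l) (a i j)]
  have key : ∀ i j k l : Fin n,
      (a i j * b k l) • ((e i * e j) * (e k * e l))
        - (a i j * b k l) • ((e k * e l) * (e i * e j))
      = (a i j * b k l * (if i = l then (2:ℝ) else 0)) • (e k * e j)
        - (a i j * b k l * (if j = l then (2:ℝ) else 0)) • (e k * e i)
        - (a i j * b k l * (if i = k then (2:ℝ) else 0)) • (e l * e j)
        - (a i j * b k l * (if j = k then (2:ℝ) else 0)) • (e i * e l)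
        - (a i j * b k l * ((if i = k then (2:ℝ) else 0) * (if j = l then (2:ℝ) else 0)))
            • (1 : CliffordAlgebra (Q n)) := by
    intro i j k l
    rw [← smul_sub,
      comm4 (e i) (e j) (e k) (e l) _ _ _ _ (hsw j k) (hsw i k) (hsw j l) (hsw i l)]
    simp only [smul_sub, smul_smul]
  set X0 : CliffordAlgebra (Q n)
    := ∑ m, ∑ q, ∑ r, (a m q * b m r) • (e q * e r) with hX0def
  set Y0 : CliffordAlgebra (Q n)
    := ∑ m, ∑ q, ∑ r, (a m r * b m q) • (e q * e r) with hY0def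
  set S0 : CliffordAlgebra (Q n)
    := ∑ m, ∑ q, (a m q * b m q * 2) • (1 : CliffordAlgebra (Q n)) with hS0def
  have hY0 : Y0 = -X0 - S0 := by
    rw [hY0def, hX0def, hS0def]
    rw [sum3_swap23 (fun m q r => (a m r * b m q) • (e q * e r))]
    rw [sum3_congr _
      (fun m q r => -((a m q * b m r) • (e q * e r))
        - (a m q * b m r * (if r = q then (2:ℝ) else 0)) • (1 : CliffordAlgebra (Q n)))
      (fun m q r => by rw [hsw r q, smul_sub, smul_neg, smul_smul])]
    simp only [Finset.sum_sub_distrib, Finset.sum_neg_distrib]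
    congr 1
    refine sum2_congr _ _ fun m q => ?_
    exact col' q (fun r => a m q * b m r) (fun _ => (1 : CliffordAlgebra (Q n)))
  have hX1 : (∑ i, ∑ j, ∑ k, ∑ l,
      (a i j * b k l * (if i = l then (2:ℝ) else 0)) • (e k * e j)) = -Y0 + -Y0 := by
    rw [sum3_congr _ _
      (fun i j k => col i (fun l => a i j * b k l) (fun _ => e k * e j))]
    rw [sum3_swap23 (fun i j k => (a i j * b k i * 2) • (e k * e j))]
    rw [sum3_congr _
      (fun i k j => -((a i j * b i k) • (e k * e j)) + -((a i j * b i k) • (e k * e j)))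
      (fun i k j => by
        rw [show a i j * b k i * 2 = -(a i j * b i k) + -(a i j * b i k) from by
          rw [hb k i]; ring, add_smul, neg_smul])]
    simp only [Finset.sum_add_distrib, Finset.sum_neg_distrib]
    rfl
  have hX2 : (∑ i, ∑ j, ∑ k, ∑ l,
      (a i j * b k l * (if j = l then (2:ℝ) else 0)) • (e k * e i)) = Y0 + Y0 := by
    rw [sum3_congr _ _
      (fun i j k => col j (fun l => a i j * b k l) (fun _ => e k * e i))]
    rw [sum3_swap12 (fun i j k => (a i j * b k j * 2) • (e k * e i))]
    rw [sum3_swap23 (fun j i k => (a i j * b k j * 2) • (e k * e i))]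
    rw [sum3_congr _
      (fun j k i => ((a j i * b j k) • (e k * e i)) + ((a j i * b j k) • (e k * e i)))
      (fun j k i => by
        rw [show a i j * b k j * 2 = (a j i * b j k) + (a j i * b j k) from by
          rw [ha i j, hb k j]; ring, add_smul])]
    simp only [Finset.sum_add_distrib]
    rfl
  have hX3 : (∑ i, ∑ j, ∑ k, ∑ l,
      (a i j * b k l * (if i = k then (2:ℝ) else 0)) • (e l * e j)) = Y0 + Y0 := by
    rw [sum4_swap34 (fun i j k l => (a i j * b k l * (if i = k then (2:ℝ) else 0)) • (e l * e j))]
    rw [sum3_congr _ _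
      (fun i j l => col i (fun k => a i j * b k l) (fun _ => e l * e j))]
    rw [sum3_swap23 (fun i j l => (a i j * b i l * 2) • (e l * e j))]
    rw [sum3_congr _
      (fun i l j => ((a i j * b i l) • (e l * e j)) + ((a i j * b i l) • (e l * e j)))
      (fun i l j => by rw [mul_two (a i j * b i l), add_smul])]
    simp only [Finset.sum_add_distrib]
    rfl
  have hX4 : (∑ i, ∑ j, ∑ k, ∑ l,
      (a i j * b k l * (if j = k then (2:ℝ) else 0)) • (e i * e l)) = -X0 + -X0 := by
    rw [sum4_swap34 (fun i j k l => (a i j * b k l * (if j = k then (2:ℝ) else 0)) • (e i * e l))]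
    rw [sum3_congr _ _
      (fun i j l => col j (fun k => a i j * b k l) (fun _ => e i * e l))]
    rw [sum3_swap12 (fun i j l => (a i j * b j l * 2) • (e i * e l))]
    rw [sum3_congr _
      (fun j i l => -((a j i * b j l) • (e i * e l)) + -((a j i * b j l) • (e i * e l)))
      (fun j i l => by
        rw [show a i j * b j l * 2 = -(a j i * b j l) + -(a j i * b j l) from by
          rw [ha i j]; ring, add_smul, neg_smul])]
    simp only [Finset.sum_add_distrib, Finset.sum_neg_distrib]
    rfl
  have hX5 : (∑ i, ∑ j, ∑ k, ∑ l,
      (a i j * b k l * ((if i = k then (2:ℝ) else 0) * (if j = l then (2:ℝ) else 0)))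
        • (1 : CliffordAlgebra (Q n))) = S0 + S0 := by
    rw [sum4_congr _
      (fun i j k l => (a i j * b k l * (if i = k then (2:ℝ) else 0)
        * (if j = l then (2:ℝ) else 0)) • (1 : CliffordAlgebra (Q n)))
      (fun i j k l => by rw [← mul_assoc])]
    rw [sum3_congr _ _
      (fun i j k => col j (fun l => a i j * b k l * (if i = k then (2:ℝ) else 0))
        (fun _ => (1 : CliffordAlgebra (Q n))))]
    rw [sum3_congr _
      (fun i j k => (a i j * b k j * 2 * (if i = k then (2:ℝ) else 0))
        • (1 : CliffordAlgebra (Q n)))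
      (fun i j k => by rw [mul_right_comm (a i j * b k j) (if i = k then (2:ℝ) else 0) 2])]
    rw [sum2_congr _ _
      (fun i j => col i (fun k => a i j * b k j * 2) (fun _ => (1 : CliffordAlgebra (Q n))))]
    rw [sum2_congr _
      (fun i j => ((a i j * b i j * 2) • (1 : CliffordAlgebra (Q n)))
        + ((a i j * b i j * 2) • (1 : CliffordAlgebra (Q n))))
      (fun i j => by
        rw [show a i j * b i j * 2 * 2 = (a i j * b i j * 2) + (a i j * b i j * 2) from by
          ring, add_smul])]
    simp only [Finset.sum_add_distrib]
    rfl
  have hab : ∀ k, α k * β k = ∑ q, ∑ r, (a k q * b k r) • (e q * e r) := by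
    intro k; rw [hα k, hβ k]
    simp only [Finset.sum_mul, Finset.mul_sum, smul_mul_smul_comm]
    exact Finset.sum_comm
  have hba : ∀ k, β k * α k = ∑ q, ∑ r, (b k q * a k r) • (e q * e r) := by
    intro k; rw [hα k, hβ k]
    simp only [Finset.sum_mul, Finset.mul_sum, smul_mul_smul_comm]
    exact Finset.sum_comm
  have hRHS : (∑ k, (α k * β k - β k * α k)) = X0 + X0 + S0 := by
    rw [show (∑ k, (α k * β k - β k * α k))
        = ∑ k, ((∑ q, ∑ r, (a k q * b k r) • (e q * e r))
            - ∑ q, ∑ r, (b k q * a k r) • (e q * e r)) from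
      Finset.sum_congr rfl fun k _ => by rw [hab k, hba k]]
    simp only [Finset.sum_sub_distrib]
    rw [sum3_congr (fun k q r => (b k q * a k r) • (e q * e r))
      (fun k q r => (a k r * b k q) • (e q * e r))
      (fun k q r => by
        show (b k q * a k r) • (e q * e r) = (a k r * b k q) • (e q * e r)
        rw [mul_comm])]
    rw [← hX0def, ← hY0def, hY0]
    abel
  have h4 : (4:ℝ) • (A*B - B*A) = (4:ℝ) • (∑ k, (α k * β k - β k * α k)) := by
    rw [hRHS]
    have hL : (4:ℝ) • (A*B - B*A) = (A+A)*(B+B) - (B+B)*(A+A) := by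
      simp only [mul_add, add_mul, smul_sub]
      module
    rw [hL, hP, hQm]
    simp only [← Finset.sum_sub_distrib]
    rw [sum4_congr _ _ key]
    simp only [Finset.sum_sub_distrib]
    rw [hX1, hX2, hX3, hX4, hX5, hY0]
    module
  exact smul_right_injective _ (by norm_num : (4:ℝ) ≠ 0) h4
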